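/- Let (Ω, 𝓕, ℙ) be a probability space, and let Y : Ω → ℝ^a, Z : Ω → ℝ^b, ξ : Ω → ℝ^c be random variables such that ξ is independent of the pair (Y, Z). Let F : ℝ^a × ℝ^c → ℝ^e be measurable and set X := F(Y, ξ). Then X and Z are conditionally independent given the σ-algebra σ(Y) generated by Y. -/

import Mathlib

open MeasureTheory ProbabilityTheory
open scoped ENNReal

/-- If `ξ` is independent of the pair `(Y, Z)` and `X = F(Y, ξ)` for measurable `F`, then
`X` and `Z` are conditionally independent given the σ-algebra generated by `Y`. -/
theorem condIndep_of_function_of_independent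
    {Ω : Type*} [MeasurableSpace Ω] [StandardBorelSpace Ω] [Nonempty Ω]
    (μ : Measure Ω) [IsProbabilityMeasure μ]
    (a b c e : ℕ)
    (Y : Ω → EuclideanSpace ℝ (Fin a)) (Z : Ω → EuclideanSpace ℝ (Fin b))
    (ξ : Ω → EuclideanSpace ℝ (Fin c))
    (hY : Measurable Y) (hZ : Measurable Z) (hξ : Measurable ξ)
    (hindep : IndepFun ξ (fun ω => (Y ω, Z ω)) μ)
    (F : EuclideanSpace ℝ (Fin a) × EuclideanSpace ℝ (Fin c) → EuclideanSpace ℝ (Fin e))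
    (hF : Measurable F) :
    CondIndepFun (MeasurableSpace.comap Y inferInstance) hY.comap_le
      (fun ω => F (Y ω, ξ ω)) Z μ := by
  classical
  set X : Ω → EuclideanSpace ℝ (Fin e) := fun ω => F (Y ω, ξ ω) with hXdef
  have hXm : Measurable X := hF.comp (hY.prodMk hξ)
  set W : Ω → EuclideanSpace ℝ (Fin a) × EuclideanSpace ℝ (Fin b) :=
    fun ω => (Y ω, Z ω) with hWdef
  have hWm : Measurable W := hY.prodMk hZ
  have hm2 : MeasurableSpace.comap W inferInstance ≤ ‹MeasurableSpace Ω› := hWm.comap_le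
  have hm' : MeasurableSpace.comap Y inferInstance ≤ ‹MeasurableSpace Ω› := hY.comap_le
  have hm'2 : MeasurableSpace.comap Y inferInstance ≤ MeasurableSpace.comap W inferInstance := by
    rintro u ⟨v, hv, rfl⟩
    exact ⟨v ×ˢ Set.univ, hv.prod MeasurableSet.univ, by ext ω; simp [W]⟩
  have hYc' : Measurable[MeasurableSpace.comap Y inferInstance] Y := fun u hu => ⟨u, hu, rfl⟩
  have hWc : Measurable[MeasurableSpace.comap W inferInstance] W := fun u hu => ⟨u, hu, rfl⟩
  haveI : SigmaFinite (μ.trim hm2) := inferInstance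
  haveI : SigmaFinite (μ.trim hm') := inferInstance
  rw [condIndepFun_iff_condExp_inter_preimage_eq_mul hXm hZ]
  intro s t hs ht
  -- the measure ν = law of ξ, ρ = law of (Y, Z)
  set ν : Measure (EuclideanSpace ℝ (Fin c)) := μ.map ξ with hνdef
  haveI : IsProbabilityMeasure ν := Measure.isProbabilityMeasure_map hξ.aemeasurable
  set ρ : Measure (EuclideanSpace ℝ (Fin a) × EuclideanSpace ℝ (Fin b)) := μ.map W with hρdef
  haveI : IsProbabilityMeasure ρ := Measure.isProbabilityMeasure_map hWm.aemeasurable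
  set H : EuclideanSpace ℝ (Fin a) → ℝ≥0∞ := fun y => ν (Prod.mk y ⁻¹' (F ⁻¹' s)) with hHdef
  have hHm : Measurable H := measurable_measure_prodMk_left (hF hs)
  have hHle : ∀ y, H y ≤ 1 := fun y => prob_le_one
  set h : EuclideanSpace ℝ (Fin a) → ℝ := fun y => (H y).toReal with hhdef
  have hhm : Measurable h := hHm.ennreal_toReal
  have hh01 : ∀ y, ‖h y‖ ≤ 1 := by
    intro y
    rw [Real.norm_eq_abs, abs_of_nonneg ENNReal.toReal_nonneg]
    simpa using ENNReal.toReal_mono ENNReal.one_ne_top (hHle y)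
  -- integrability facts
  have hintf1 : Integrable ((X ⁻¹' s).indicator fun _ => (1 : ℝ)) μ :=
    (integrable_const (1 : ℝ)).indicator (hXm hs)
  have hintf2 : Integrable ((Z ⁻¹' t).indicator fun _ => (1 : ℝ)) μ :=
    (integrable_const (1 : ℝ)).indicator (hZ ht)
  have hinthY : Integrable (fun ω => h (Y ω)) μ := by
    refine Integrable.mono' (integrable_const (1 : ℝ))
      ((hhm.comp hY).aestronglyMeasurable) ?_
    exact Filter.Eventually.of_forall fun ω => hh01 (Y ω)
  -- key measure computation using independence
  have core : ∀ C : Set (EuclideanSpace ℝ (Fin a) × EuclideanSpace ℝ (Fin b)),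
      MeasurableSet C → μ (W ⁻¹' C ∩ X ⁻¹' s) = ∫⁻ p in C, H p.1 ∂ρ := by
    intro C hC
    have hmap : μ.map (fun ω => (W ω, ξ ω)) = ρ.prod ν :=
      (indepFun_iff_map_prod_eq_prod_map_map hWm.aemeasurable hξ.aemeasurable).mp hindep.symm
    set D : Set ((EuclideanSpace ℝ (Fin a) × EuclideanSpace ℝ (Fin b)) × EuclideanSpace ℝ (Fin c)) :=
      (Prod.fst ⁻¹' C) ∩ ((fun q => F (q.1.1, q.2)) ⁻¹' s) with hDdef
    have hD : MeasurableSet D :=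
      (hC.preimage measurable_fst).inter
        (hs.preimage (hF.comp ((measurable_fst.fst).prodMk measurable_snd)))
    have hpre : W ⁻¹' C ∩ X ⁻¹' s = (fun ω => (W ω, ξ ω)) ⁻¹' D := by
      ext ω; simp [D, W, X]
    rw [hpre, ← Measure.map_apply (hWm.prodMk hξ) hD, hmap, Measure.prod_apply hD]
    have hsec : ∀ p, ν (Prod.mk p ⁻¹' D) = C.indicator (fun p => H p.1) p := by
      intro p
      by_cases hp : p ∈ C
      · have : Prod.mk p ⁻¹' D = Prod.mk p.1 ⁻¹' (F ⁻¹' s) := by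
          ext x; simp [D, hp]
        rw [this, Set.indicator_of_mem hp]
      · have : Prod.mk p ⁻¹' D = ∅ := by
          ext x; simp [D, hp]
        rw [this, Set.indicator_of_notMem hp, measure_empty]
    simp_rw [hsec]
    rw [lintegral_indicator hC _]
  -- the same identity for Bochner integrals
  have coreR : ∀ C : Set (EuclideanSpace ℝ (Fin a) × EuclideanSpace ℝ (Fin b)),
      MeasurableSet C →
      ∫ ω in W ⁻¹' C, h (Y ω) ∂μ
        = ∫ ω in W ⁻¹' C, (X ⁻¹' s).indicator (fun _ => (1 : ℝ)) ω ∂μ := by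
    intro C hC
    have hRHS : ∫ ω in W ⁻¹' C, (X ⁻¹' s).indicator (fun _ => (1 : ℝ)) ω ∂μ
        = (μ (W ⁻¹' C ∩ X ⁻¹' s)).toReal := by
      have h0 := integral_indicator_one (μ := μ.restrict (W ⁻¹' C)) (hXm hs)
      rw [measureReal_def, Measure.restrict_apply (hXm hs), Set.inter_comm] at h0
      exact h0
    have hLHS : ∫ ω in W ⁻¹' C, h (Y ω) ∂μ = (∫⁻ p in C, H p.1 ∂ρ).toReal := by
      have h1 : ∫ ω in W ⁻¹' C, h (Y ω) ∂μ = ∫ p in C, h p.1 ∂ρ := by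
        have hgm : AEStronglyMeasurable
            (fun p : EuclideanSpace ℝ (Fin a) × EuclideanSpace ℝ (Fin b) => h p.1) (μ.map W) :=
          (hhm.comp measurable_fst).aestronglyMeasurable
        rw [hρdef, setIntegral_map hC hgm hWm.aemeasurable]
      rw [h1, hhdef]
      exact integral_toReal ((hHm.comp measurable_fst).aemeasurable)
        (Filter.Eventually.of_forall fun p => lt_of_le_of_lt (hHle p.1) ENNReal.one_lt_top)
    rw [hLHS, hRHS, core C hC]
  -- conditional expectation of the indicator of `X ⁻¹' s` given `σ(Y, Z)` is `h ∘ Y`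
  have hA : (fun ω => h (Y ω)) =ᵐ[μ] μ[(X ⁻¹' s).indicator fun _ => (1 : ℝ)|MeasurableSpace.comap W inferInstance] := by
    refine ae_eq_condExp_of_forall_setIntegral_eq hm2 hintf1 ?_ ?_ ?_
    · exact fun u _ _ => hinthY.integrableOn
    · rintro u ⟨C, hC, rfl⟩ -
      exact coreR C hC
    · exact ((hhm.comp (measurable_fst.comp hWc)).stronglyMeasurable).aestronglyMeasurable
  -- hence the same holds given `σ(Y)` (tower property)
  have hA' : μ⟦X ⁻¹' s|MeasurableSpace.comap Y inferInstance⟧ =ᵐ[μ] fun ω => h (Y ω) := by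
    have tower := condExp_condExp_of_le (μ := μ)
      (f := (X ⁻¹' s).indicator fun _ => (1 : ℝ)) hm'2 hm2
    have hsm : StronglyMeasurable[MeasurableSpace.comap Y inferInstance]
        (fun ω => h (Y ω)) := (hhm.comp hYc').stronglyMeasurable
    refine tower.symm.trans ((condExp_congr_ae hA.symm).trans ?_)
    rw [condExp_of_stronglyMeasurable hm' hsm hinthY]
  -- the main factorization
  have hZm2 : MeasurableSet[MeasurableSpace.comap W inferInstance] (Z ⁻¹' t) := ⟨Set.univ ×ˢ t, MeasurableSet.univ.prod ht, by
    ext ω; simp [W]⟩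
  have hf2SM : StronglyMeasurable[MeasurableSpace.comap W inferInstance] ((Z ⁻¹' t).indicator fun _ => (1 : ℝ)) :=
    stronglyMeasurable_const.indicator hZm2
  have hprodeq : ((X ⁻¹' s ∩ Z ⁻¹' t).indicator fun _ => (1 : ℝ))
      = ((Z ⁻¹' t).indicator fun _ => (1 : ℝ)) * (X ⁻¹' s).indicator fun _ => (1 : ℝ) := by
    rw [Set.inter_comm]
    ext ω
    by_cases h1 : ω ∈ Z ⁻¹' t <;> by_cases h2 : ω ∈ X ⁻¹' s <;>
      simp [Set.indicator_apply, h1, h2]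
  have hintprod : Integrable
      (((Z ⁻¹' t).indicator fun _ => (1 : ℝ)) * (X ⁻¹' s).indicator fun _ => (1 : ℝ)) μ := by
    rw [← hprodeq]
    exact (integrable_const (1 : ℝ)).indicator ((hXm hs).inter (hZ ht))
  have step1 : μ[((Z ⁻¹' t).indicator fun _ => (1 : ℝ)) *
        ((X ⁻¹' s).indicator fun _ => (1 : ℝ))|MeasurableSpace.comap W inferInstance]
      =ᵐ[μ] ((Z ⁻¹' t).indicator fun _ => (1 : ℝ)) *
        μ[(X ⁻¹' s).indicator fun _ => (1 : ℝ)|MeasurableSpace.comap W inferInstance] :=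
    condExp_mul_of_stronglyMeasurable_left hf2SM hintprod hintf1
  have step1' : μ[((Z ⁻¹' t).indicator fun _ => (1 : ℝ)) *
        ((X ⁻¹' s).indicator fun _ => (1 : ℝ))|MeasurableSpace.comap W inferInstance]
      =ᵐ[μ] fun ω => h (Y ω) * ((Z ⁻¹' t).indicator fun _ => (1 : ℝ)) ω := by
    refine step1.trans ?_
    filter_upwards [hA] with ω hω
    simp only [Pi.mul_apply]
    rw [← hω, mul_comm]
  have hinthf2 : Integrable (fun ω => h (Y ω) * ((Z ⁻¹' t).indicator fun _ => (1 : ℝ)) ω) μ := by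
    refine Integrable.bdd_mul hintf2 ((hhm.comp hY).aestronglyMeasurable) (c := 1) (Filter.Eventually.of_forall fun ω => hh01 (Y ω))
  have step2 : μ[(fun ω => h (Y ω) * ((Z ⁻¹' t).indicator fun _ => (1 : ℝ)) ω)|MeasurableSpace.comap Y inferInstance]
      =ᵐ[μ] fun ω => h (Y ω) * (μ⟦Z ⁻¹' t|MeasurableSpace.comap Y inferInstance⟧) ω := by
    have := condExp_mul_of_stronglyMeasurable_left (μ := μ) (m := MeasurableSpace.comap Y inferInstance)
      (f := fun ω => h (Y ω)) (g := (Z ⁻¹' t).indicator fun _ => (1 : ℝ))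
      ((hhm.comp hYc').stronglyMeasurable) hinthf2 hintf2
    exact this
  -- assemble
  have key : μ⟦X ⁻¹' s ∩ Z ⁻¹' t|MeasurableSpace.comap Y inferInstance⟧ =ᵐ[μ] fun ω => h (Y ω) * (μ⟦Z ⁻¹' t|MeasurableSpace.comap Y inferInstance⟧) ω := by
    have tower := condExp_condExp_of_le (μ := μ)
      (f := ((Z ⁻¹' t).indicator fun _ => (1 : ℝ)) * (X ⁻¹' s).indicator fun _ => (1 : ℝ))
      hm'2 hm2
    calc μ⟦X ⁻¹' s ∩ Z ⁻¹' t|MeasurableSpace.comap Y inferInstance⟧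
        = μ[((Z ⁻¹' t).indicator fun _ => (1 : ℝ)) *
            ((X ⁻¹' s).indicator fun _ => (1 : ℝ))|MeasurableSpace.comap Y inferInstance] := by rw [hprodeq]
      _ =ᵐ[μ] μ[μ[((Z ⁻¹' t).indicator fun _ => (1 : ℝ)) *
            ((X ⁻¹' s).indicator fun _ => (1 : ℝ))|MeasurableSpace.comap W inferInstance]|MeasurableSpace.comap Y inferInstance] := tower.symm
      _ =ᵐ[μ] μ[(fun ω => h (Y ω) * ((Z ⁻¹' t).indicator fun _ => (1 : ℝ)) ω)|MeasurableSpace.comap Y inferInstance] :=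
            condExp_congr_ae step1'
      _ =ᵐ[μ] fun ω => h (Y ω) * (μ⟦Z ⁻¹' t|MeasurableSpace.comap Y inferInstance⟧) ω := step2
  refine key.trans ?_
  filter_upwards [hA'] with ω hω
  rw [hω]
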